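/- Let $N \geq 5$ and $\tau = 1 + \bar\eta$ with $\bar\eta > 0$ small enough that $\frac{N-2}{2} - \frac{N-2}{N+2}\tau > 1$. Let $x_1, \dots, x_k$ be $k$ equally spaced points on a circle of radius $r$ in $\mathbb{R}^2 \times \{0\} \subset \mathbb{R}^N$ with $k \leq r$. Then there is a constant $C$ such that for every $y$ with $|y - x_1| \leq |y - x_j|$ for all $j$: $\left(\sum_{j=2}^{k} \frac{1}{(1+|y-x_j|)^{N-2}}\right)^{\frac{N+2}{N-2}} \leq C \left(\frac{k}{r}\right)^{\frac{N+2}{2}-\tau} \frac{1}{(1+|y-x_1|)^{\frac{N+2}{2}+\tau}}$. -/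

import Mathlib

open Real Finset

/-- `k` equally spaced points on the circle of radius `r` in the first two
coordinates of `ℝ^N` (indexed by `j = 1, ..., k`). -/
noncomputable def circlePoint (N k : ℕ) (r : ℝ) (j : ℕ) : EuclideanSpace ℝ (Fin N) :=
  WithLp.toLp 2 fun i =>
    if (i : ℕ) = 0 then r * Real.cos (2 * ((j : ℝ) - 1) * π / k)
    else if (i : ℕ) = 1 then r * Real.sin (2 * ((j : ℝ) - 1) * π / k)
    else 0

lemma norm_circlePoint_sub (N k : ℕ) (hN : 2 ≤ N) (r : ℝ) (hr : 0 ≤ r) (j : ℕ) :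
    ‖circlePoint N k r j - circlePoint N k r 1‖
      = 2 * r * |Real.sin (((j : ℝ) - 1) * π / k)| := by
  set φ : ℝ := ((j : ℝ) - 1) * π / k with hφ
  set A : ℝ := r * (Real.cos (2 * φ) - 1) with hA
  set B : ℝ := r * Real.sin (2 * φ) with hB
  have hcoord : ∀ i : Fin N, (circlePoint N k r j - circlePoint N k r 1) i
      = if (i : ℕ) = 0 then A else if (i : ℕ) = 1 then B else 0 := by
    intro i
    have h2φ : 2 * ((j : ℝ) - 1) * π / k = 2 * φ := by rw [hφ]; ring
    show circlePoint N k r j i - circlePoint N k r 1 i = _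
    simp only [circlePoint, PiLp.toLp_apply, Nat.cast_one, sub_self, mul_zero, zero_mul, zero_div,
      Real.cos_zero, Real.sin_zero, h2φ, hA, hB]
    split_ifs <;> ring
  rw [EuclideanSpace.norm_eq]
  have hsum : ∑ i : Fin N, ‖(circlePoint N k r j - circlePoint N k r 1) i‖ ^ 2
      = A ^ 2 + B ^ 2 := by
    have h1 : ∀ i : Fin N, ‖(circlePoint N k r j - circlePoint N k r 1) i‖ ^ 2
        = (fun m : ℕ => (if m = 0 then A ^ 2 else 0) + (if m = 1 then B ^ 2 else 0)) (i : ℕ) := by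
      intro i
      rw [hcoord i, Real.norm_eq_abs, sq_abs]
      rcases Nat.eq_zero_or_pos (i : ℕ) with h | h
      · simp [h]
      · rcases eq_or_ne (i : ℕ) 1 with h1 | h1
        · simp [h1]
        · simp [Nat.pos_iff_ne_zero.mp h, h1]
    rw [Finset.sum_congr rfl fun i _ => h1 i,
      Fin.sum_univ_eq_sum_range (fun m : ℕ => (if m = 0 then A ^ 2 else 0) + (if m = 1 then B ^ 2 else 0)) N,
      Finset.sum_add_distrib]
    rw [Finset.sum_ite_eq' (Finset.range N) 0 (fun _ => A ^ 2),
      Finset.sum_ite_eq' (Finset.range N) 1 (fun _ => B ^ 2)]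
    have h0mem : (0 : ℕ) ∈ Finset.range N := by simp; omega
    have h1mem : (1 : ℕ) ∈ Finset.range N := by simp; omega
    simp_all
  rw [hsum]
  have hkey : A ^ 2 + B ^ 2 = (2 * r * |Real.sin φ|) ^ 2 := by
    have hA' := Real.sin_sq_add_cos_sq (2 * φ)
    have hB' := Real.cos_two_mul φ
    have hC' := Real.sin_sq_add_cos_sq φ
    have hD' := sq_abs (Real.sin φ)
    rw [hA, hB]
    linear_combination r^2*hA' - 2*r^2*hB' - 4*r^2*hD' - 4*r^2*hC'
  rw [hkey, Real.sqrt_sq (by positivity)]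

lemma sin_lower (k m : ℕ) (hm1 : 1 ≤ m) (hmk : m < k) :
    2 * ((min m (k - m) : ℕ) : ℝ) / k ≤ Real.sin ((m : ℝ) * π / k) := by
  have hk : (0:ℝ) < k := by
    have : 0 < k := by omega
    exact_mod_cast this
  by_cases h : 2 * m ≤ k
  · have hmin : min m (k - m) = m := by omega
    rw [hmin]
    have h1 : (0:ℝ) ≤ (m:ℝ) * π / k := by positivity
    have h2 : (m:ℝ) * π / k ≤ π / 2 := by
      rw [div_le_div_iff₀ hk (by norm_num : (0:ℝ) < 2)]
      have hc : (2 * m : ℝ) ≤ k := by exact_mod_cast h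
      nlinarith [Real.pi_pos]
    have h3 := Real.mul_le_sin h1 h2
    calc 2 * (m:ℝ) / k = 2 / π * ((m:ℝ) * π / k) := by
          field_simp
      _ ≤ _ := h3
  · have hmin : min m (k - m) = k - m := by omega
    push_neg at h
    rw [hmin]
    have hcast : ((k - m : ℕ) : ℝ) = (k:ℝ) - m := by
      have : m ≤ k := hmk.le
      push_cast [this]; ring
    have hle : (m:ℝ) ≤ k := by exact_mod_cast hmk.le
    have hsin : Real.sin ((m:ℝ) * π / k) = Real.sin (((k:ℝ) - m) * π / k) := by
      rw [← Real.sin_pi_sub]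
      congr 1
      field_simp
    rw [hsin, hcast]
    have h1 : (0:ℝ) ≤ ((k:ℝ) - m) * π / k := by
      have := Real.pi_pos
      apply div_nonneg _ hk.le
      nlinarith
    have h2 : ((k:ℝ) - m) * π / k ≤ π / 2 := by
      rw [div_le_div_iff₀ hk (by norm_num : (0:ℝ) < 2)]
      have hc : (k:ℝ) < 2 * m := by exact_mod_cast h
      nlinarith [Real.pi_pos]
    have h3 := Real.mul_le_sin h1 h2
    calc 2 * ((k:ℝ) - m) / k = 2 / π * (((k:ℝ) - m) * π / k) := by
          field_simp
      _ ≤ _ := h3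

lemma sum_Icc_shift (k : ℕ) (f : ℕ → ℝ) :
    ∑ j ∈ Finset.Icc 2 k, f (j - 1) = ∑ m ∈ Finset.Icc 1 (k - 1), f m := by
  refine Finset.sum_nbij' (fun j => j - 1) (fun m => m + 1) ?_ ?_ ?_ ?_ ?_ <;>
    intros a ha <;> simp only [Finset.mem_Icc] at * <;> omega

lemma sum_Icc_reflect (k : ℕ) (f : ℕ → ℝ) :
    ∑ m ∈ Finset.Icc 1 (k - 1), f (k - m) = ∑ m ∈ Finset.Icc 1 (k - 1), f m := by
  refine Finset.sum_nbij' (fun m => k - m) (fun m => k - m) ?_ ?_ ?_ ?_ ?_ <;>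
    intros a ha <;> simp only [Finset.mem_Icc] at * <;> first | omega | (congr 1; omega)

set_option maxHeartbeats 1000000 in
theorem stmt_17 (N : ℕ) (hN : 5 ≤ N) (eta : ℝ) (heta : 0 < eta)
    (τ : ℝ) (hτ : τ = 1 + eta)
    (hsmall : ((N : ℝ) - 2) / 2 - ((N : ℝ) - 2) / ((N : ℝ) + 2) * τ > 1) :
    ∃ C > (0 : ℝ),
      ∀ (k : ℕ), 2 ≤ k → ∀ r : ℝ, 0 < r → (k : ℝ) ≤ r →
        ∀ y : EuclideanSpace ℝ (Fin N),
          (∀ j, 2 ≤ j → j ≤ k → ‖y - circlePoint N k r 1‖ ≤ ‖y - circlePoint N k r j‖) →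
          (∑ j ∈ Finset.Icc 2 k,
              1 / (1 + ‖y - circlePoint N k r j‖) ^ ((N : ℝ) - 2)) ^
              (((N : ℝ) + 2) / ((N : ℝ) - 2)) ≤
            C * ((k : ℝ) / r) ^ (((N : ℝ) + 2) / 2 - τ) *
              (1 / (1 + ‖y - circlePoint N k r 1‖) ^ (((N : ℝ) + 2) / 2 + τ)) := by
  have hN5 : (5:ℝ) ≤ (N:ℝ) := by exact_mod_cast hN
  have hN2 : (0:ℝ) < (N:ℝ) - 2 := by linarith
  have hN2' : ((N:ℝ) - 2) ≠ 0 := ne_of_gt hN2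
  have hNp2 : (0:ℝ) < (N:ℝ) + 2 := by linarith
  have hNp2' : ((N:ℝ) + 2) ≠ 0 := ne_of_gt hNp2
  have hτ0 : 0 < τ := by rw [hτ]; linarith
  set a : ℝ := ((N:ℝ)-2)/2 + ((N:ℝ)-2)/((N:ℝ)+2)*τ with hadef
  set b : ℝ := ((N:ℝ)-2)/2 - ((N:ℝ)-2)/((N:ℝ)+2)*τ with hbdef
  have hb1 : 1 < b := hsmall
  have hb0 : (0:ℝ) < b := by linarith
  have ha0 : (0:ℝ) < a := by
    have h1 : 0 < ((N:ℝ)-2)/((N:ℝ)+2)*τ := by positivity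
    have h2 : 0 < ((N:ℝ)-2)/2 := by positivity
    rw [hadef]; linarith
  have hab : a + b = (N:ℝ) - 2 := by rw [hadef, hbdef]; ring
  set p : ℝ := ((N:ℝ)+2)/((N:ℝ)-2) with hpdef
  have hp0 : 0 < p := div_pos hNp2 hN2
  set g : ℕ → ℝ := fun n => 1/(n:ℝ)^b with hg
  have hgsum : Summable g := Real.summable_one_div_nat_rpow.mpr hb1
  have hg0 : ∀ n, 0 ≤ g n := fun n => by
    rw [hg]
    have : (0:ℝ) ≤ ((n:ℝ))^b := Real.rpow_nonneg (Nat.cast_nonneg n) b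
    positivity
  set S : ℝ := ∑' n, g n with hS
  have hS0 : 0 ≤ S := tsum_nonneg hg0
  clear_value S
  refine ⟨(2*S+1)^p, Real.rpow_pos_of_pos (by linarith) p, ?_⟩
  intro k hk r hr hkr y hy
  have hk0 : (0:ℝ) < k := by
    have : 0 < k := by omega
    exact_mod_cast this
  have hkr0 : (0:ℝ) < (k:ℝ)/r := div_pos hk0 hr
  set d1 : ℝ := ‖y - circlePoint N k r 1‖ with hd1def
  have hd10 : 0 ≤ d1 := norm_nonneg _
  clear_value d1
  have h1d1 : (0:ℝ) < 1 + d1 := by linarith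
  have hda : (0:ℝ) < (1+d1)^a := Real.rpow_pos_of_pos h1d1 a
  have hda' : (0:ℝ) ≤ 1/(1+d1)^a := one_div_nonneg.mpr hda.le
  -- per-term bound
  have hbound : ∀ j ∈ Finset.Icc 2 k,
      1 / (1 + ‖y - circlePoint N k r j‖) ^ ((N:ℝ) - 2)
        ≤ (1/(1+d1)^a) * (((k:ℝ)/(2*r))^b * (g (j-1) + g (k - (j-1)))) := by
    intro j hj
    rw [Finset.mem_Icc] at hj
    obtain ⟨hj2, hjk⟩ := hj
    set dj : ℝ := ‖y - circlePoint N k r j‖ with hdjdef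
    have hdj0 : 0 ≤ dj := norm_nonneg _
    have hd1dj : d1 ≤ dj := hy j hj2 hjk
    have hm1 : 1 ≤ j - 1 := by omega
    have hmk : j - 1 < k := by omega
    have hjcast : ((j:ℝ) - 1) = ((j-1 : ℕ) : ℝ) := by
      have h1j : 1 ≤ j := by omega
      push_cast [h1j]; ring
    set M : ℕ := min (j-1) (k - (j-1)) with hM
    have hM1 : 1 ≤ M := by omega
    have hMr : (1:ℝ) ≤ (M:ℝ) := by exact_mod_cast hM1
    have hMr0 : (0:ℝ) < (M:ℝ) := by linarith
    have hsinlb := sin_lower k (j-1) hm1 hmk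
    have hnorm : ‖circlePoint N k r j - circlePoint N k r 1‖
        = 2*r*|Real.sin (((j:ℝ)-1)*π/k)| :=
      norm_circlePoint_sub N k (by omega) r hr.le j
    set x : ℝ := ‖circlePoint N k r j - circlePoint N k r 1‖ with hxdef
    have htri : x ≤ dj + d1 := by
      calc x = ‖(circlePoint N k r j - y) + (y - circlePoint N k r 1)‖ := by
            rw [hxdef]; congr 1; abel
        _ ≤ ‖circlePoint N k r j - y‖ + ‖y - circlePoint N k r 1‖ := norm_add_le _ _
        _ = dj + d1 := by rw [norm_sub_rev, ← hdjdef, ← hd1def]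
    clear_value dj x
    have hxlb : 4*r*(M:ℝ)/k ≤ x := by
      rw [hnorm, hjcast]
      have habs : 2 * ((M:ℕ):ℝ)/k ≤ |Real.sin (((j-1:ℕ):ℝ)*π/k)| :=
        le_trans hsinlb (le_abs_self _)
      calc 4*r*(M:ℝ)/k = 2*r*(2*(M:ℝ)/k) := by ring
        _ ≤ 2*r*|Real.sin (((j-1:ℕ):ℝ)*π/k)| := by
            apply mul_le_mul_of_nonneg_left habs (by positivity)
    clear_value M
    have hlb0 : (0:ℝ) < 4*r*(M:ℝ)/k := div_pos (by nlinarith) hk0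
    have hxpos : 0 < x := lt_of_lt_of_le hlb0 hxlb
    have hx2 : x/2 ≤ 1 + dj := by linarith
    have hxb2 : (0:ℝ) < (x/2)^b := Real.rpow_pos_of_pos (half_pos hxpos) b
    have key1 : (1+d1)^a * (x/2)^b ≤ (1+dj)^((N:ℝ)-2) := by
      rw [← hab, Real.rpow_add (by linarith : (0:ℝ) < 1+dj)]
      have t1 : (1+d1)^a ≤ (1+dj)^a := Real.rpow_le_rpow (by linarith) (by linarith) ha0.le
      have t2 : (x/2)^b ≤ (1+dj)^b :=
        Real.rpow_le_rpow (half_pos hxpos).le hx2 hb0.le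
      exact mul_le_mul t1 t2 hxb2.le (Real.rpow_pos_of_pos (by linarith) a).le
    have step1 : 1/(1+dj)^((N:ℝ)-2) ≤ 1/((1+d1)^a * (x/2)^b) :=
      one_div_le_one_div_of_le (mul_pos hda hxb2) key1
    have step2 : 1/((1+d1)^a * (x/2)^b) = (1/(1+d1)^a) * (2/x)^b := by
      rw [Real.div_rpow hxpos.le (by norm_num : (0:ℝ) ≤ 2),
        Real.div_rpow (by norm_num : (0:ℝ) ≤ 2) hxpos.le]
      have h2b : (0:ℝ) < (2:ℝ)^b := Real.rpow_pos_of_pos two_pos b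
      have hxb : (0:ℝ) < x^b := Real.rpow_pos_of_pos hxpos b
      field_simp [h2b.ne', hxb.ne', hda.ne']
    have step3 : (2/x)^b ≤ ((k:ℝ)/(2*r))^b * g M := by
      have hcmp : 2/x ≤ (k:ℝ)/(2*r) * (1/(M:ℝ)) := by
        have hx4 : 2/x ≤ 2/(4*r*(M:ℝ)/k) := by
          rw [div_eq_mul_one_div (2:ℝ) x, div_eq_mul_one_div (2:ℝ) (4*r*(M:ℝ)/k)]
          exact mul_le_mul_of_nonneg_left (one_div_le_one_div_of_le hlb0 hxlb)
            (by norm_num)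
        calc 2/x ≤ 2/(4*r*(M:ℝ)/k) := hx4
          _ = (k:ℝ)/(2*r)*(1/(M:ℝ)) := by
              field_simp [hMr0.ne', hr.ne', hk0.ne']
              ring
      calc (2/x)^b ≤ ((k:ℝ)/(2*r)*(1/(M:ℝ)))^b :=
            Real.rpow_le_rpow (div_nonneg (by norm_num) hxpos.le) hcmp hb0.le
        _ = ((k:ℝ)/(2*r))^b * (1/(M:ℝ))^b :=
            Real.mul_rpow (by positivity) (one_div_nonneg.mpr hMr0.le)
        _ = ((k:ℝ)/(2*r))^b * g M := by
            rw [hg]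
            simp only []
            rw [Real.div_rpow (by norm_num : (0:ℝ) ≤ 1) (Nat.cast_nonneg M), Real.one_rpow]
    have step4 : g M ≤ g (j-1) + g (k-(j-1)) := by
      rcases min_choice (j-1) (k-(j-1)) with he | he
      · rw [hM, he]; exact le_add_of_nonneg_right (hg0 _)
      · rw [hM, he]; exact le_add_of_nonneg_left (hg0 _)
    calc 1/(1+dj)^((N:ℝ)-2) ≤ (1/(1+d1)^a)*(2/x)^b := by rw [← step2]; exact step1
      _ ≤ (1/(1+d1)^a)*(((k:ℝ)/(2*r))^b * (g (j-1)+g (k-(j-1)))) := by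
          apply mul_le_mul_of_nonneg_left _ hda'
          calc (2/x)^b ≤ ((k:ℝ)/(2*r))^b * g M := step3
            _ ≤ ((k:ℝ)/(2*r))^b * (g (j-1)+g (k-(j-1))) :=
                mul_le_mul_of_nonneg_left step4 (by positivity)
  -- sum bound
  have hsum1 : (∑ j ∈ Finset.Icc 2 k, 1/(1+‖y - circlePoint N k r j‖)^((N:ℝ)-2))
      ≤ (2*S+1) * ((k:ℝ)/r)^b * (1/(1+d1)^a) := by
    have hA : (∑ j ∈ Finset.Icc 2 k, 1/(1+‖y - circlePoint N k r j‖)^((N:ℝ)-2))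
        ≤ (1/(1+d1)^a) * (((k:ℝ)/(2*r))^b * (2*S)) := by
      calc (∑ j ∈ Finset.Icc 2 k, 1/(1+‖y - circlePoint N k r j‖)^((N:ℝ)-2))
          ≤ ∑ j ∈ Finset.Icc 2 k,
              (1/(1+d1)^a) * (((k:ℝ)/(2*r))^b * (g (j-1) + g (k - (j-1)))) :=
            Finset.sum_le_sum hbound
        _ = (1/(1+d1)^a) * (((k:ℝ)/(2*r))^b
              * ∑ j ∈ Finset.Icc 2 k, (g (j-1) + g (k - (j-1)))) := by
            rw [← Finset.mul_sum, ← Finset.mul_sum]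
        _ ≤ _ := by
            apply mul_le_mul_of_nonneg_left _ hda'
            apply mul_le_mul_of_nonneg_left _ (by positivity)
            have e1 : ∑ j ∈ Finset.Icc 2 k, (g (j-1) + g (k - (j-1)))
                = ∑ m ∈ Finset.Icc 1 (k-1), (g m + g (k-m)) :=
              sum_Icc_shift k (fun n => g n + g (k-n))
            rw [e1, Finset.sum_add_distrib, sum_Icc_reflect k g]
            have e2 : ∑ m ∈ Finset.Icc 1 (k-1), g m ≤ S := by
              rw [hS]
              exact Summable.sum_le_tsum _ (fun n _ => hg0 n) hgsum
            linarith
    refine le_trans hA ?_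
    have h1 : ((k:ℝ)/(2*r))^b ≤ ((k:ℝ)/r)^b := by
      apply Real.rpow_le_rpow (by positivity) _ hb0.le
      rw [div_le_div_iff₀ (by positivity) hr]
      nlinarith
    calc (1/(1+d1)^a) * (((k:ℝ)/(2*r))^b * (2*S))
        ≤ (1/(1+d1)^a) * (((k:ℝ)/r)^b * (2*S+1)) := by
          apply mul_le_mul_of_nonneg_left _ hda'
          apply mul_le_mul h1 (by linarith) (by linarith) (by positivity)
      _ = (2*S+1) * ((k:ℝ)/r)^b * (1/(1+d1)^a) := by ring
  -- raise to the power p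
  have hLHS0 : 0 ≤ ∑ j ∈ Finset.Icc 2 k, 1/(1+‖y - circlePoint N k r j‖)^((N:ℝ)-2) := by
    apply Finset.sum_nonneg
    intro j _
    have h1 : (0:ℝ) < 1 + ‖y - circlePoint N k r j‖ := by
      have := norm_nonneg (y - circlePoint N k r j)
      linarith
    exact (one_div_nonneg).mpr (Real.rpow_pos_of_pos h1 _).le
  have hstep : (∑ j ∈ Finset.Icc 2 k, 1/(1+‖y - circlePoint N k r j‖)^((N:ℝ)-2))^p
      ≤ ((2*S+1) * ((k:ℝ)/r)^b * (1/(1+d1)^a))^p :=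
    Real.rpow_le_rpow hLHS0 hsum1 hp0.le
  have hexp : ((2*S+1) * ((k:ℝ)/r)^b * (1/(1+d1)^a))^p
      = (2*S+1)^p * (((k:ℝ)/r)^b)^p * ((1/(1+d1)^a))^p := by
    rw [Real.mul_rpow (mul_nonneg (by linarith) (by positivity)) hda',
      Real.mul_rpow (by linarith) (by positivity)]
  have hbp : b * p = ((N:ℝ)+2)/2 - τ := by
    rw [hbdef, hpdef]; field_simp
  have hap : a * p = ((N:ℝ)+2)/2 + τ := by
    rw [hadef, hpdef]; field_simp
  have h2 : (((k:ℝ)/r)^b)^p = ((k:ℝ)/r)^(((N:ℝ)+2)/2 - τ) := by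
    rw [← Real.rpow_mul hkr0.le, hbp]
  have h3 : ((1/(1+d1)^a))^p = 1/(1+d1)^(((N:ℝ)+2)/2 + τ) := by
    rw [Real.div_rpow (by norm_num : (0:ℝ) ≤ 1) hda.le, Real.one_rpow,
      ← Real.rpow_mul h1d1.le, hap]
  calc (∑ j ∈ Finset.Icc 2 k, 1/(1+‖y - circlePoint N k r j‖)^((N:ℝ)-2))^p
      ≤ ((2*S+1) * ((k:ℝ)/r)^b * (1/(1+d1)^a))^p := hstep
    _ = (2*S+1)^p * ((k:ℝ)/r)^(((N:ℝ)+2)/2 - τ)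
        * (1/(1+d1)^(((N:ℝ)+2)/2 + τ)) := by rw [hexp, h2, h3]
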